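/- Let K be a valued field, λ ≤ 1 in the value group, ρ ∈ Γ^×, g ∈ K^×, and x₀ ≠ x ∈ K with |x − x₀| < λ·ρ. Suppose f(x), f(x₀) ∈ K satisfy |f(x) − f(x₀) − g·(x − x₀)| ≤ |g|·|x − x₀|²/ρ. Then rv_λ((f(x) − f(x₀))/(x − x₀)) = rv_λ(g). -/

import Mathlib

/- `K` is a valued field: a field with a (Krull) valuation `v : K → Γ₀ = Γ ∪ {0}`,
written multiplicatively. -/
variable {K : Type*} [Field K] {Γ₀ : Type*} [LinearOrderedCommGroupWithZero Γ₀]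

/-- The relation defining the leading-term structure `RV_λ = K^×/(1+I) ∪ {0}` where
`I = {x : |x| < λ}` : two elements are identified iff both are `0` or they differ
multiplicatively by an element of `1 + I`. -/
def rvRel (v : Valuation K Γ₀) (lam : Γ₀) (x y : K) : Prop :=
  (x = 0 ∧ y = 0) ∨ ∃ u : K, v (u - 1) < lam ∧ y = x * u

/-- The leading term map `rv_λ : K → RV_λ`, extending the projection
`K^× → K^×/(1+I)` by `0 ↦ 0`. -/
def rv (v : Valuation K Γ₀) (lam : Γ₀) (x : K) : Quot (rvRel v lam) := Quot.mk _ x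

/-- From an order-1 Taylor approximation to the `RV_λ`-Jacobian property: if `λ ≤ 1`,
`ρ` is in the value group, `g ≠ 0`, `x ≠ x₀` with `|x − x₀| < λ·ρ`, and
`|f(x) − f(x₀) − g·(x − x₀)| ≤ |g|·|x − x₀|²/ρ`, then
`rv_λ((f(x) − f(x₀))/(x − x₀)) = rv_λ(g)`. -/
theorem rv_jacobian_from_taylor (v : Valuation K Γ₀) (lam ρ : Γ₀)
    (hlam0 : lam ≠ 0) (hlam1 : lam ≤ 1) (hρ : ρ ≠ 0)
    (g : K) (hg : g ≠ 0) (x x₀ fx fx₀ : K) (hxx : x ≠ x₀)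
    (hclose : v (x - x₀) < lam * ρ)
    (htaylor : v (fx - fx₀ - g * (x - x₀)) ≤ v g * (v (x - x₀) * v (x - x₀)) * ρ⁻¹) :
    rv v lam ((fx - fx₀) / (x - x₀)) = rv v lam g := by
  set Δ := x - x₀ with hΔdef
  have hΔ : Δ ≠ 0 := sub_ne_zero.mpr hxx
  have hvΔ : v Δ ≠ 0 := (Valuation.ne_zero_iff v).mpr hΔ
  have hvg : v g ≠ 0 := (Valuation.ne_zero_iff v).mpr hg
  set q : K := (fx - fx₀) / Δ with hqdef
  have hq : q - g = (fx - fx₀ - g * Δ) / Δ := by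
    rw [eq_div_iff hΔ, sub_mul, hqdef, div_mul_cancel₀ _ hΔ]
  have h1 : v Δ * ρ⁻¹ < lam := by
    rw [← div_eq_mul_inv, div_lt_iff₀ (zero_lt_iff.mpr hρ)]
    exact hclose
  have hbound : v (fx - fx₀ - g * Δ) < v g * v Δ * lam := by
    calc v (fx - fx₀ - g * Δ) ≤ v g * (v Δ * v Δ) * ρ⁻¹ := htaylor
      _ = (v g * v Δ) * (v Δ * ρ⁻¹) := by simp [mul_assoc]
      _ < (v g * v Δ) * lam := by
          exact mul_lt_mul_of_pos_left h1 (zero_lt_iff.mpr (mul_ne_zero hvg hvΔ))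
  have hvqg : v (q - g) < lam * v g := by
    rw [hq, map_div₀, div_lt_iff₀ (zero_lt_iff.mpr hvΔ)]
    calc v (fx - fx₀ - g * Δ) < v g * v Δ * lam := hbound
      _ = lam * v g * v Δ := by simp [mul_assoc, mul_comm, mul_left_comm]
  have hlt : v (q - g) < v g := lt_of_lt_of_le hvqg (by
    calc lam * v g ≤ 1 * v g := mul_le_mul_left hlam1 _
      _ = v g := one_mul _)
  have hq0 : q ≠ 0 := by
    intro h
    rw [h, zero_sub, Valuation.map_neg] at hlt
    exact lt_irrefl _ hlt
  have hvq : v q = v g := by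
    have := Valuation.map_sub_swap v q g
    exact Valuation.map_eq_of_sub_lt v hlt
  apply Quot.sound
  right
  refine ⟨g / q, ?_, by field_simp⟩
  have : g / q - 1 = -((q - g) / q) := by field_simp; ring
  rw [this, Valuation.map_neg, map_div₀, hvq, div_lt_iff₀ (zero_lt_iff.mpr hvg)]
  exact hvqg
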